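/- Fix ω_a, ω_b > 0 with ω_a + ω_b = 1. The function r̄(r_a, r_b) = r_a^{ω_a} r_b^{ω_b} / ((1−r_a)^{ω_a}(1−r_b)^{ω_b} + r_a^{ω_a} r_b^{ω_b}) on (0,1)² satisfies min(r_a, r_b) ≤ r̄(r_a, r_b) ≤ max(r_a, r_b). -/

import Mathlib

open Real

lemma fused_helper
    (ω_a ω_b : ℝ) (hωa : 0 < ω_a) (hωb : 0 < ω_b) (hωsum : ω_a + ω_b = 1)
    (r_a r_b : ℝ) (hra : r_a ∈ Set.Ioo (0:ℝ) 1) (hrb : r_b ∈ Set.Ioo (0:ℝ) 1)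
    (hle : r_a ≤ r_b) :
    r_a ≤ r_a ^ ω_a * r_b ^ ω_b /
          ((1 - r_a) ^ ω_a * (1 - r_b) ^ ω_b + r_a ^ ω_a * r_b ^ ω_b)
    ∧ r_a ^ ω_a * r_b ^ ω_b /
          ((1 - r_a) ^ ω_a * (1 - r_b) ^ ω_b + r_a ^ ω_a * r_b ^ ω_b) ≤ r_b := by
  obtain ⟨ha0, ha1⟩ := hra
  obtain ⟨hb0, hb1⟩ := hrb
  set ta := (1 - r_a) / r_a with hta
  set tb := (1 - r_b) / r_b with htb
  have hta0 : 0 < ta := div_pos (by linarith) ha0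
  have htb0 : 0 < tb := div_pos (by linarith) hb0
  have htba : tb ≤ ta := by
    rw [hta, htb, div_le_div_iff₀ hb0 ha0]; nlinarith
  set x := ta ^ ω_a * tb ^ ω_b with hx
  have hx0 : 0 < x := mul_pos (rpow_pos_of_pos hta0 _) (rpow_pos_of_pos htb0 _)
  have hxta : x ≤ ta := by
    calc x ≤ ta ^ ω_a * ta ^ ω_b := by
          have := rpow_le_rpow htb0.le htba hωb.le
          have h := rpow_pos_of_pos hta0 ω_a
          nlinarith
      _ = ta ^ (ω_a + ω_b) := (rpow_add hta0 _ _).symm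
      _ = ta := by rw [hωsum, rpow_one]
  have hxtb : tb ≤ x := by
    calc tb = tb ^ (ω_a + ω_b) := by rw [hωsum, rpow_one]
      _ = tb ^ ω_a * tb ^ ω_b := rpow_add htb0 _ _
      _ ≤ x := by
          have := rpow_le_rpow htb0.le htba hωa.le
          have h := rpow_pos_of_pos htb0 ω_b
          nlinarith
  have hp : 0 < r_a ^ ω_a * r_b ^ ω_b :=
    mul_pos (rpow_pos_of_pos ha0 _) (rpow_pos_of_pos hb0 _)
  have hq : (1 - r_a) ^ ω_a * (1 - r_b) ^ ω_b = x * (r_a ^ ω_a * r_b ^ ω_b) := by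
    have h1 : (1 - r_a) = ta * r_a := by rw [hta]; field_simp
    have h2 : (1 - r_b) = tb * r_b := by rw [htb]; field_simp
    rw [h1, h2, mul_rpow hta0.le ha0.le, mul_rpow htb0.le hb0.le, hx]
    ring
  have hF : r_a ^ ω_a * r_b ^ ω_b /
      ((1 - r_a) ^ ω_a * (1 - r_b) ^ ω_b + r_a ^ ω_a * r_b ^ ω_b) = 1 / (x + 1) := by
    rw [hq]
    rw [show x * (r_a ^ ω_a * r_b ^ ω_b) + r_a ^ ω_a * r_b ^ ω_b
        = (x + 1) * (r_a ^ ω_a * r_b ^ ω_b) by ring]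
    rw [div_mul_eq_div_div_swap, div_self hp.ne', one_div]
  rw [hF]
  have hra' : r_a = 1 / (ta + 1) := by
    rw [hta]; field_simp; ring
  have hrb' : r_b = 1 / (tb + 1) := by
    rw [htb]; field_simp; ring
  constructor
  · rw [hra']
    apply one_div_le_one_div_of_le (by linarith)
    linarith
  · rw [hrb']
    apply one_div_le_one_div_of_le (by linarith)
    linarith

/-- The GCI-fused existence probability with η = 1 lies between the two input
existence probabilities. -/
theorem fused_existence_between
    (ω_a ω_b : ℝ) (hωa : 0 < ω_a) (hωb : 0 < ω_b) (hωsum : ω_a + ω_b = 1)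
    (r_a r_b : ℝ) (hra : r_a ∈ Set.Ioo (0:ℝ) 1) (hrb : r_b ∈ Set.Ioo (0:ℝ) 1) :
    min r_a r_b ≤
        r_a ^ ω_a * r_b ^ ω_b /
          ((1 - r_a) ^ ω_a * (1 - r_b) ^ ω_b + r_a ^ ω_a * r_b ^ ω_b)
      ∧ r_a ^ ω_a * r_b ^ ω_b /
          ((1 - r_a) ^ ω_a * (1 - r_b) ^ ω_b + r_a ^ ω_a * r_b ^ ω_b)
        ≤ max r_a r_b := by
  rcases le_total r_a r_b with h | h
  · have := fused_helper ω_a ω_b hωa hωb hωsum r_a r_b hra hrb h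
    rw [min_eq_left h, max_eq_right h]
    exact this
  · have := fused_helper ω_b ω_a hωb hωa (by linarith) r_b r_a hrb hra h
    rw [min_eq_right h, max_eq_left h]
    have e : r_b ^ ω_b * r_a ^ ω_a /
          ((1 - r_b) ^ ω_b * (1 - r_a) ^ ω_a + r_b ^ ω_b * r_a ^ ω_a)
        = r_a ^ ω_a * r_b ^ ω_b /
          ((1 - r_a) ^ ω_a * (1 - r_b) ^ ω_b + r_a ^ ω_a * r_b ^ ω_b) := by
      ring_nf
    rw [e] at this
    exact this
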